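/- In an MCR game with target t, let v be a vertex and 0 ≤ k ≤ |V| be such that v ∈ Attr_k \ Attr_{k−1} (with the convention Attr_{−1} = ∅). Then for every 0 ≤ j ≤ |V|: (i) if j < k then val_j(v) = +∞, and (ii) if j ≥ k then val_j(v) ≤ j·W. -/

import Mathlib

open Filter

/-- A two-player turn-based weighted game graph. `owner v = true` means that
vertex `v` belongs to player Max, `owner v = false` that it belongs to player Min.
Every vertex has at least one successor. -/
structure Game (V : Type) where
  owner : V → Bool
  E : V → V → Prop
  nonempty : ∀ v, ∃ v', E v v'
  w : V → V → ℤ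

namespace Game

variable {V : Type}

/-- The (reversed) history of the first `k` vertices of `π` (most recent first). -/
def hist (π : ℕ → V) (k : ℕ) : List V := (List.ofFn fun i : Fin k => π i).reverse

/-- A strategy: given the (reversed) list of previously visited vertices and the current
vertex, it picks a successor of the current vertex. -/
structure Strategy (g : Game V) where
  next : List V → V → V
  valid : ∀ h v, g.E v (next h v)

/-- A memoryless strategy only depends on the current vertex. -/
def Strategy.Memoryless {g : Game V} (s : g.Strategy) : Prop :=
  ∀ h h' v, s.next h v = s.next h' v

/-- A finite-memory strategy is one encoded by a deterministic Moore machine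
`⟨M, m0, up, dec⟩`: the choice after a finite play is `dec` applied to the memory state
reached by reading the play (the initial vertex is not read) and to the last vertex. -/
def Strategy.FiniteMemory {g : Game V} (s : g.Strategy) : Prop :=
  ∃ (M : Type) (_ : Fintype M) (m0 : M) (up : M → V → M) (dec : M → V → V),
    ∀ h v, s.next h v = dec (List.foldl up m0 (((h.reverse ++ [v]).drop 1))) v

variable (g : Game V)

/-- Next vertex chosen by the owner of the current vertex. -/
def step (σ τ : g.Strategy) (h : List V) (v : V) : V :=
  if g.owner v then σ.next h v else τ.next h v

/-- Current vertex and reversed history after `k` steps of the play `Play(v, σ, τ)`. -/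
def playAux (σ τ : g.Strategy) (v : V) : ℕ → V × List V
  | 0 => (v, [])
  | k+1 =>
      let p := playAux σ τ v k
      (g.step σ τ p.2 p.1, p.1 :: p.2)

/-- `Play(v, σ, τ)`: the unique play starting in `v` and conforming to the
strategy `σ` of Max and the strategy `τ` of Min. -/
def play (σ τ : g.Strategy) (v : V) (k : ℕ) : V := (g.playAux σ τ v k).1

/-- An infinite sequence of vertices is a play when consecutive vertices are linked
by edges. -/
def IsPlay (π : ℕ → V) : Prop := ∀ k, g.E (π k) (π (k+1))

/-- A play conforms to a strategy `s` of the player `p` if, whenever the current vertex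
belongs to `p`, the next vertex is the one prescribed by `s`. -/
def Conforms (p : Bool) (s : g.Strategy) (π : ℕ → V) : Prop :=
  ∀ k, g.owner (π k) = p → π (k+1) = s.next (hist π k) (π k)

/-- Total-payoff of the prefix of length `k`: the sum of the first `k` edge weights. -/
def TPfin (π : ℕ → V) (k : ℕ) : ℤ := ∑ i ∈ Finset.range k, g.w (π i) (π (i+1))

/-- Total payoff of an infinite play: `liminf` of the payoffs of its prefixes. -/
noncomputable def TP (π : ℕ → V) : EReal :=
  liminf (fun k => (((g.TPfin π k : ℤ) : ℝ) : EReal)) atTop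

/-- Mean payoff of an infinite play. -/
noncomputable def MP (π : ℕ → V) : EReal :=
  liminf (fun k => ((((g.TPfin π k : ℤ) : ℝ) / (k : ℝ)) : EReal)) atTop

open Classical in
/-- Min-cost reachability payoff with target `t`: total payoff up to the first visit
of `t`, and `+∞` if `t` is never visited. -/
noncomputable def MCR (t : V) (π : ℕ → V) : EReal :=
  if h : ∃ k, π k = t then (((g.TPfin π (Nat.find h) : ℤ) : ℝ) : EReal) else ⊤

open Classical in
/-- `MCR` payoff restricted to reaching the target among the first `i+1` vertices. -/
noncomputable def MCRbd (t : V) (i : ℕ) (π : ℕ → V) : EReal :=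
  if ∃ k ≤ i, π k = t then g.MCR t π else ⊤

/-- Value of a strategy `σ` of Max from `v` : `inf_τ P(Play(v, σ, τ))`. -/
noncomputable def valMax (P : (ℕ → V) → EReal) (v : V) (σ : g.Strategy) : EReal :=
  ⨅ τ : g.Strategy, P (g.play σ τ v)

/-- Value of a strategy `τ` of Min from `v` : `sup_σ P(Play(v, σ, τ))`. -/
noncomputable def valMin (P : (ℕ → V) → EReal) (v : V) (τ : g.Strategy) : EReal :=
  ⨆ σ : g.Strategy, P (g.play σ τ v)

/-- Lower value `Val⁻(v) = sup_σ inf_τ P(Play(v, σ, τ))`. -/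
noncomputable def lowerVal (P : (ℕ → V) → EReal) (v : V) : EReal :=
  ⨆ σ : g.Strategy, g.valMax P v σ

/-- Upper value `Val⁺(v) = inf_τ sup_σ P(Play(v, σ, τ))`. -/
noncomputable def upperVal (P : (ℕ → V) → EReal) (v : V) : EReal :=
  ⨅ τ : g.Strategy, g.valMin P v τ

end Game

/-- A min-cost reachability game: a game together with a target vertex `t` whose only
outgoing edge is a self-loop of weight `0`. -/
structure MCRGame (V : Type) extends Game V where
  t : V
  loop : E t t
  loopOnly : ∀ v, E t v → v = t
  loopZero : w t t = 0

/-- The value of a (determined) MCR game. -/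
noncomputable def MCRGame.Val {V : Type} (G : MCRGame V) : V → EReal :=
  fun v => G.toGame.lowerVal (G.toGame.MCR G.t) v

/-- The `i`-step value `val_i(v) = inf_τ sup_σ MCR_i(Play(v, σ, τ))`. -/
noncomputable def MCRGame.ival {V : Type} (G : MCRGame V) (i : ℕ) : V → EReal :=
  fun v => G.toGame.upperVal (G.toGame.MCRbd G.t i) v

/-- The attractor sequence `Attr_i` of the target `t`. -/
def attr {V : Type} (g : Game V) (t : V) : ℕ → Set V
  | 0 => {t}
  | n+1 => attr g t n
      ∪ {v | g.owner v = false ∧ ∃ v', g.E v v' ∧ v' ∈ attr g t n}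
      ∪ {v | g.owner v = true ∧ ∀ v', g.E v v' → v' ∈ attr g t n}

section Aux

open Classical

variable {V : Type} (g : Game V) (t : V)

lemma attr_mono : Monotone (attr g t) :=
  monotone_nat_of_le_succ (fun _ _ hv => Or.inl (Or.inl hv))

lemma t_mem_attr (n : ℕ) : t ∈ attr g t n :=
  attr_mono g t (Nat.zero_le n) rfl

lemma play_succ (σ τ : g.Strategy) (v : V) (s : ℕ) :
    g.play σ τ v (s+1) =
      (if g.owner (g.play σ τ v s) then σ.next (g.playAux σ τ v s).2 (g.play σ τ v s)
       else τ.next (g.playAux σ τ v s).2 (g.play σ τ v s)) := rfl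

lemma play_edge (σ τ : g.Strategy) (v : V) (s : ℕ) :
    g.E (g.play σ τ v s) (g.play σ τ v (s+1)) := by
  rw [play_succ]
  split
  · exact σ.valid _ _
  · exact τ.valid _ _

lemma fMax_exists (N : ℕ) (u : V) :
    ∃ u', g.E u u' ∧ ∀ i ≤ N, u ∉ attr g t (i+1) → u' ∉ attr g t i := by
  by_cases h : ∃ i ≤ N, u ∉ attr g t (i+1)
  · obtain ⟨i, hiN, hi⟩ := h
    set m := Nat.findGreatest (fun i => u ∉ attr g t (i+1)) N with hm
    have hPm : u ∉ attr g t (m+1) :=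
      Nat.findGreatest_spec (P := fun i => u ∉ attr g t (i+1)) hiN hi
    have hkey : ∀ i ≤ N, u ∉ attr g t (i+1) → i ≤ m :=
      fun i h1 h2 => Nat.le_findGreatest h1 h2
    have hstep : ∃ u', g.E u u' ∧ u' ∉ attr g t m := by
      by_cases ho : g.owner u = true
      · by_contra hc
        push_neg at hc
        exact hPm (Or.inr ⟨ho, fun v' hv' => hc v' hv'⟩)
      · obtain ⟨u', hu'⟩ := g.nonempty u
        refine ⟨u', hu', fun hmem => hPm (Or.inl (Or.inr ⟨?_, u', hu', hmem⟩))⟩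
        simpa using ho
    obtain ⟨u', h1, h2⟩ := hstep
    exact ⟨u', h1, fun i hiN' hi' hmem => h2 (attr_mono g t (hkey i hiN' hi') hmem)⟩
  · push_neg at h
    obtain ⟨u', hu'⟩ := g.nonempty u
    exact ⟨u', hu', fun i hiN' hi' => absurd (h i hiN') hi'⟩

lemma max_step (hOnly : ∀ v, g.E t v → v = t) {u u' : V}
    (ho : g.owner u = true) (hE : g.E u u') {i : ℕ} (hu : u ∈ attr g t (i+1)) :
    u' ∈ attr g t i := by
  have hex : ∃ i', u ∈ attr g t i' := ⟨i+1, hu⟩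
  rcases Nat.eq_zero_or_eq_succ_pred (Nat.find hex) with h0 | hsucc
  · have hu0 : u ∈ attr g t 0 := h0 ▸ Nat.find_spec hex
    have h1 : u = t := hu0
    rw [h1] at hE
    have h2 : u' = t := hOnly u' hE
    rw [h2]
    exact t_mem_attr g t i
  · set m := Nat.find hex - 1 with hmdef
    have hmem : u ∈ attr g t (m+1) := by
      have := Nat.find_spec hex
      rwa [hsucc] at this
    have hnot : u ∉ attr g t m := Nat.find_min hex (by omega)
    have hmi : m ≤ i := by
      by_contra hc
      push_neg at hc
      exact hnot (attr_mono g t (by omega) hu)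
    rcases hmem with (hmem | hmem) | hmem
    · exact absurd hmem hnot
    · rw [hmem.1] at ho; exact absurd ho (by simp)
    · exact attr_mono g t hmi (hmem.2 u' hE)

lemma fMin_exists (hloop : g.E t t) (u : V) :
    ∃ u', g.E u u' ∧ ∀ i, u ∈ attr g t (i+1) → u' ∈ attr g t i := by
  by_cases hex : ∃ i', u ∈ attr g t i'
  · rcases Nat.eq_zero_or_eq_succ_pred (Nat.find hex) with h0 | hsucc
    · have hu0 : u ∈ attr g t 0 := h0 ▸ Nat.find_spec hex
      have h1 : u = t := hu0
      rw [h1]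
      exact ⟨t, hloop, fun i _ => t_mem_attr g t i⟩
    · set m := Nat.find hex - 1 with hmdef
      have hmem : u ∈ attr g t (m+1) := by
        have := Nat.find_spec hex
        rwa [hsucc] at this
      have hnot : u ∉ attr g t m := Nat.find_min hex (by omega)
      have key : ∀ i, u ∈ attr g t (i+1) → m ≤ i := by
        intro i hi
        by_contra hc
        push_neg at hc
        exact hnot (attr_mono g t (by omega) hi)
      rcases hmem with (hmem | hmem) | hmem
      · exact absurd hmem hnot
      · obtain ⟨_, u', hE, hu'⟩ := hmem
        exact ⟨u', hE, fun i hi => attr_mono g t (key i hi) hu'⟩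
      · obtain ⟨u', hE⟩ := g.nonempty u
        exact ⟨u', hE, fun i hi => attr_mono g t (key i hi) (hmem.2 u' hE)⟩
  · obtain ⟨u', hE⟩ := g.nonempty u
    exact ⟨u', hE, fun i hi => absurd ⟨i+1, hi⟩ hex⟩

lemma TPfin_le (W : ℕ) (hW : ∀ v v', g.E v v' → |g.w v v'| ≤ (W : ℤ))
    (π : ℕ → V) (hπ : ∀ s, g.E (π s) (π (s+1))) (n : ℕ) :
    g.TPfin π n ≤ (n : ℤ) * W := by
  calc g.TPfin π n ≤ ∑ i ∈ Finset.range n, (W : ℤ) := by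
        apply Finset.sum_le_sum
        intro i _
        exact le_trans (le_abs_self _) (hW _ _ (hπ i))
    _ = (n : ℤ) * W := by simp [mul_comm]

end Aux

theorem statement_6 {V : Type} [Fintype V] (G : MCRGame V) (W : ℕ)
    (hW : ∀ v v', G.E v v' → |G.w v v'| ≤ (W : ℤ))
    (v : V) (k : ℕ) (hk : k ≤ Fintype.card V)
    (hv : v ∈ attr G.toGame G.t k)
    (hv' : ∀ j, j < k → v ∉ attr G.toGame G.t j) :
    ∀ j ≤ Fintype.card V,
      (j < k → G.ival j v = ⊤) ∧
      (k ≤ j → G.ival j v ≤ ((((j * W : ℕ) : ℤ) : ℝ) : EReal)) := by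
  classical
  intro j hj
  constructor
  · -- j < k : value is ⊤
    intro hjk
    let σ : G.toGame.Strategy :=
      ⟨fun _ u => Classical.choose (fMax_exists G.toGame G.t (Fintype.card V) u),
       fun _ u => (Classical.choose_spec (fMax_exists G.toGame G.t (Fintype.card V) u)).1⟩
    have hσ : ∀ u i, i ≤ Fintype.card V → u ∉ attr G.toGame G.t (i+1) →
        Classical.choose (fMax_exists G.toGame G.t (Fintype.card V) u) ∉ attr G.toGame G.t i :=
      fun u i h1 h2 => (Classical.choose_spec (fMax_exists G.toGame G.t (Fintype.card V) u)).2 i h1 h2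
    apply top_unique
    simp only [MCRGame.ival, Game.upperVal, Game.valMin]
    refine le_iInf fun τ => ?_
    refine le_trans ?_ (le_iSup _ σ)
    have avoid : ∀ s ≤ j, G.toGame.play σ τ v s ∉ attr G.toGame G.t (j - s) := by
      intro s
      induction s with
      | zero => intro _; simpa [Game.play, Game.playAux] using hv' j hjk
      | succ n ih =>
        intro hn
        have hnj : n ≤ j := by omega
        have ihn := ih hnj
        have hsub : j - n = (j - (n+1)) + 1 := by omega
        rw [play_succ]
        split
        case isTrue ho =>
          exact hσ _ (j - (n+1)) (by omega) (by rw [← hsub]; exact ihn)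
        case isFalse ho =>
          intro hmem
          apply ihn
          rw [hsub]
          exact Or.inl (Or.inr ⟨by simpa using ho, _, τ.valid _ _, hmem⟩)
    have hbd : G.toGame.MCRbd G.t j (G.toGame.play σ τ v) = ⊤ := by
      rw [Game.MCRbd, if_neg]
      push_neg
      intro m hm hEq
      exact avoid m hm (hEq ▸ t_mem_attr G.toGame G.t (j - m))
    rw [hbd]
  · -- k ≤ j : value at most j*W
    intro hkj
    let τ : G.toGame.Strategy :=
      ⟨fun _ u => Classical.choose (fMin_exists G.toGame G.t G.loop u),
       fun _ u => (Classical.choose_spec (fMin_exists G.toGame G.t G.loop u)).1⟩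
    have hτ : ∀ u i, u ∈ attr G.toGame G.t (i+1) →
        Classical.choose (fMin_exists G.toGame G.t G.loop u) ∈ attr G.toGame G.t i :=
      fun u i h1 => (Classical.choose_spec (fMin_exists G.toGame G.t G.loop u)).2 i h1
    simp only [MCRGame.ival, Game.upperVal, Game.valMin]
    refine le_trans (iInf_le _ τ) ?_
    refine iSup_le fun σ => ?_
    have reach : ∀ s ≤ k, G.toGame.play σ τ v s ∈ attr G.toGame G.t (k - s) := by
      intro s
      induction s with
      | zero => intro _; simpa [Game.play, Game.playAux] using hv
      | succ n ih =>
        intro hn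
        have hnj : n ≤ k := by omega
        have ihn := ih hnj
        have hsub : k - n = (k - (n+1)) + 1 := by omega
        rw [hsub] at ihn
        rw [play_succ]
        split
        case isTrue ho => exact max_step G.toGame G.t G.loopOnly ho (σ.valid _ _) ihn
        case isFalse ho => exact hτ _ _ ihn
    have hπk : G.toGame.play σ τ v k = G.t := by
      have := reach k le_rfl
      simpa [attr] using this
    have hexj : ∃ m ≤ j, G.toGame.play σ τ v m = G.t := ⟨k, hkj, hπk⟩
    have hex : ∃ m, G.toGame.play σ τ v m = G.t := ⟨k, hπk⟩
    rw [Game.MCRbd, if_pos hexj, Game.MCR, dif_pos hex]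
    have hfind : Nat.find hex ≤ j := le_trans (Nat.find_min' hex hπk) hkj
    have hTP : G.toGame.TPfin (G.toGame.play σ τ v) (Nat.find hex) ≤ ((j * W : ℕ) : ℤ) := by
      calc G.toGame.TPfin (G.toGame.play σ τ v) (Nat.find hex)
          ≤ (Nat.find hex : ℤ) * W :=
            TPfin_le G.toGame W hW _ (fun s => play_edge G.toGame σ τ v s) _
        _ ≤ ((j * W : ℕ) : ℤ) := by push_cast; exact_mod_cast Nat.mul_le_mul_right W hfind
    exact EReal.coe_le_coe_iff.2 (by exact_mod_cast hTP)
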